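/- Let P ⊆ ℝⁿ be a compact polyhedron and v a vertex of P such that every vertex w adjacent to v (i.e., conv{v,w} is an edge of P) satisfies ⟨c,v⟩ ≤ ⟨c,w⟩. Then v minimizes x ↦ ⟨c,x⟩ over P. -/

import Mathlib

open Matrix Set
open scoped Classical

/-- A polyhedron in `ℝⁿ`: the solution set of a finite system of linear
inequalities `A x ≥ b`. -/
def IsPolyhedron {n : ℕ} (P : Set (Fin n → ℝ)) : Prop :=
  ∃ (m : ℕ) (A : Fin m → Fin n → ℝ) (b : Fin m → ℝ),
    P = {x | ∀ i, A i ⬝ᵥ x ≥ b i}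

/-- A face of `P`: the empty set or the set of minimizers of a linear
functional over `P`. -/
def IsFace {n : ℕ} (P F : Set (Fin n → ℝ)) : Prop :=
  F = ∅ ∨ ∃ c : Fin n → ℝ, F = {x ∈ P | ∀ y ∈ P, c ⬝ᵥ x ≤ c ⬝ᵥ y}

/-- Dimension of a polyhedron: dimension of the direction of its affine
hull, with the convention `pdim ∅ = -1`. -/
noncomputable def pdim {n : ℕ} (P : Set (Fin n → ℝ)) : ℤ :=
  if P = ∅ then -1 else (Module.finrank ℝ (vectorSpan ℝ P) : ℤ)


/-- A vertex of `P` is a point whose singleton is a face of `P`. -/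
def IsVertex {n : ℕ} (P : Set (Fin n → ℝ)) (v : Fin n → ℝ) : Prop :=
  IsFace P {v}

/-- Two points are adjacent vertices of `P` if they are distinct and the
segment between them is an edge (a 1-dimensional face) of `P`. -/
noncomputable def Adj {n : ℕ} (P : Set (Fin n → ℝ)) (v w : Fin n → ℝ) : Prop :=
  v ≠ w ∧ IsFace P (segment ℝ v w) ∧ pdim (segment ℝ v w) = 1

private lemma dot_cont {n : ℕ} (w : Fin n → ℝ) : Continuous fun x : Fin n → ℝ => w ⬝ᵥ x := by
  unfold dotProduct
  exact continuous_finset_sum _ fun i _ => continuous_const.mul (continuous_apply i)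

private lemma sum_dot {n m : ℕ} (s : Finset (Fin m)) (f : Fin m → Fin n → ℝ) (x : Fin n → ℝ) :
    (∑ i ∈ s, f i) ⬝ᵥ x = ∑ i ∈ s, f i ⬝ᵥ x := by
  unfold dotProduct
  rw [Finset.sum_comm]
  simp [Finset.sum_apply, Finset.sum_mul]

private lemma exists_eps {m : ℕ} (a t : Fin m → ℝ) (ha : ∀ i, 0 ≤ a i)
    (h : ∀ i, t i < 0 → 0 < a i) :
    ∃ ε : ℝ, 0 < ε ∧ ∀ i, 0 ≤ a i + ε * t i := by
  classical
  set s : Finset ℝ :=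
    insert (1:ℝ) ((Finset.univ.filter (fun i => t i < 0)).image (fun i => a i / (-t i))) with hs
  have hne : s.Nonempty := ⟨1, Finset.mem_insert_self _ _⟩
  have hpos : 0 < s.min' hne := by
    rw [Finset.lt_min'_iff]
    intro b hb
    rw [hs, Finset.mem_insert] at hb
    rcases hb with rfl | hb
    · norm_num
    · obtain ⟨i, hi, rfl⟩ := Finset.mem_image.1 hb
      have hti : t i < 0 := (Finset.mem_filter.1 hi).2
      exact div_pos (h i hti) (by linarith)
  refine ⟨s.min' hne, hpos, ?_⟩
  intro i
  rcases le_or_gt 0 (t i) with hti | hti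
  · nlinarith [ha i]
  · have hmem : a i / (-t i) ∈ s := by
      rw [hs]
      exact Finset.mem_insert_of_mem
        (Finset.mem_image.2 ⟨i, Finset.mem_filter.2 ⟨Finset.mem_univ i, hti⟩, rfl⟩)
    have := Finset.min'_le s _ hmem
    rw [le_div_iff₀ (by linarith : (0:ℝ) < -t i)] at this
    nlinarith

theorem adj_argmin {n : ℕ} (P : Set (Fin n → ℝ)) (hP : IsPolyhedron P)
    (hc : IsCompact P) (c : Fin n → ℝ) (v : Fin n → ℝ) (hv : IsVertex P v)
    (hmin : ∀ w, Adj P v w → c ⬝ᵥ v ≤ c ⬝ᵥ w) :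
    ∀ x ∈ P, c ⬝ᵥ v ≤ c ⬝ᵥ x := by

  classical
  obtain ⟨m, A, b, hPeq⟩ := hP
  have hmem : ∀ x, x ∈ P ↔ ∀ i, b i ≤ A i ⬝ᵥ x := by
    intro x; rw [hPeq]; rfl
  have hPconv : Convex ℝ P := by
    intro x hx y hy a b' ha hb hab
    refine (hmem _).2 fun i => ?_
    have hx' := (hmem x).1 hx i
    have hy' := (hmem y).1 hy i
    have hval : A i ⬝ᵥ (a • x + b' • y) = a * (A i ⬝ᵥ x) + b' * (A i ⬝ᵥ y) := by
      rw [dotProduct_add, dotProduct_smul, dotProduct_smul, smul_eq_mul, smul_eq_mul]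
    rw [hval]
    have h3 : a * b i + b' * b i = b i := by rw [← add_mul, hab, one_mul]
    have h4 := mul_le_mul_of_nonneg_left hx' ha
    have h5 := mul_le_mul_of_nonneg_left hy' hb
    linarith
  -- vertex data
  obtain ⟨d, hd⟩ := hv.resolve_left (Set.singleton_ne_empty v)
  have hvP : v ∈ P := by
    have : v ∈ ({v} : Set (Fin n → ℝ)) := rfl
    rw [hd] at this; exact this.1
  have hdmin : ∀ y ∈ P, d ⬝ᵥ v ≤ d ⬝ᵥ y := by
    have : v ∈ ({v} : Set (Fin n → ℝ)) := rfl
    rw [hd] at this; exact this.2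
  have hstrict : ∀ x ∈ P, x ≠ v → d ⬝ᵥ v < d ⬝ᵥ x := by
    intro x hx hxv
    rcases lt_or_eq_of_le (hdmin x hx) with h | h
    · exact h
    · exfalso; apply hxv
      have : x ∈ ({v} : Set (Fin n → ℝ)) := by
        rw [hd]
        exact ⟨hx, fun y hy => h ▸ hdmin y hy⟩
      exact this
  -- the tangent cone at v
  set C : Set (Fin n → ℝ) := {u | ∀ i, A i ⬝ᵥ v = b i → 0 ≤ A i ⬝ᵥ u} with hCdef
  have hstep : ∀ u ∈ C, ∃ ε : ℝ, 0 < ε ∧ v + ε • u ∈ P := by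
    intro u hu
    obtain ⟨ε, hε, hεs⟩ := exists_eps (fun i => A i ⬝ᵥ v - b i) (fun i => A i ⬝ᵥ u)
      (fun i => sub_nonneg.2 ((hmem v).1 hvP i))
      (by
        intro i hti
        have hti' : A i ⬝ᵥ u < 0 := hti
        show (0:ℝ) < A i ⬝ᵥ v - b i
        rcases eq_or_lt_of_le ((hmem v).1 hvP i) with h | h
        · exact absurd (hu i h.symm) (not_le.2 hti')
        · linarith)
    refine ⟨ε, hε, (hmem _).2 fun i => ?_⟩
    have h1 : (0:ℝ) ≤ (A i ⬝ᵥ v - b i) + ε * (A i ⬝ᵥ u) := hεs i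
    have hval : A i ⬝ᵥ (v + ε • u) = A i ⬝ᵥ v + ε * (A i ⬝ᵥ u) := by
      rw [dotProduct_add, dotProduct_smul, smul_eq_mul]
    linarith
  have hCd : ∀ x ∈ P, x - v ∈ C := by
    intro x hx i hi
    rw [dotProduct_sub, hi, sub_nonneg]
    exact (hmem x).1 hx i
  have hCsmul : ∀ (r : ℝ), 0 ≤ r → ∀ u ∈ C, r • u ∈ C := by
    intro r hr u hu i hi
    rw [dotProduct_smul, smul_eq_mul]
    exact mul_nonneg hr (hu i hi)
  have hdpos : ∀ u ∈ C, u ≠ 0 → 0 < d ⬝ᵥ u := by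
    intro u hu hu0
    obtain ⟨ε, hε, hεP⟩ := hstep u hu
    have hne : v + ε • u ≠ v := by
      intro h
      apply hu0
      have h0 : ε • u = 0 := by
        have := congrArg (fun z => z - v) h
        simpa using this
      exact (smul_eq_zero.1 h0).resolve_left (ne_of_gt hε)
    have h1 := hstrict _ hεP hne
    rw [dotProduct_add, dotProduct_smul, smul_eq_mul] at h1
    nlinarith
  have hCclosed : IsClosed C := by
    have hCeq : C = ⋂ i, {u : Fin n → ℝ | A i ⬝ᵥ v = b i → 0 ≤ A i ⬝ᵥ u} := by
      ext u; simp [hCdef, Set.mem_iInter]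
    rw [hCeq]
    refine isClosed_iInter fun i => ?_
    by_cases h : A i ⬝ᵥ v = b i
    · have heq : {u : Fin n → ℝ | A i ⬝ᵥ v = b i → 0 ≤ A i ⬝ᵥ u}
          = (fun u => A i ⬝ᵥ u) ⁻¹' (Set.Ici 0) := by
        ext u; simp [h]
      rw [heq]
      exact isClosed_Ici.preimage (dot_cont (A i))
    · have heq : {u : Fin n → ℝ | A i ⬝ᵥ v = b i → 0 ≤ A i ⬝ᵥ u} = Set.univ := by
        ext u; simp [h]
      rw [heq]; exact isClosed_univ
  -- the compact convex base of the cone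
  set B : Set (Fin n → ℝ) := {u ∈ C | d ⬝ᵥ u = 1} with hBdef
  have hBclosed : IsClosed B := by
    have hBeq : B = C ∩ ((fun u => d ⬝ᵥ u) ⁻¹' {1}) := by
      ext u
      simp only [hBdef, Set.mem_setOf_eq, Set.mem_inter_iff, Set.mem_preimage,
        Set.mem_singleton_iff]
    rw [hBeq]
    exact hCclosed.inter (isClosed_singleton.preimage (dot_cont d))
  have hBbdd : Bornology.IsBounded B := by
    by_cases hS : (C ∩ Metric.sphere (0 : Fin n → ℝ) 1).Nonempty
    · obtain ⟨u₀, hu₀, hmin₀⟩ :=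
        ((isCompact_sphere (0 : Fin n → ℝ) 1).inter_left hCclosed).exists_isMinOn hS
          ((dot_cont d).continuousOn)
      have hu₀0 : u₀ ≠ 0 := by
        intro h
        have h2 := hu₀.2
        rw [h] at h2
        simp at h2
      have hδ : 0 < d ⬝ᵥ u₀ := hdpos u₀ hu₀.1 hu₀0
      have hsub : B ⊆ Metric.closedBall 0 (d ⬝ᵥ u₀)⁻¹ := by
        rintro u ⟨huC, hud⟩
        have hu0 : u ≠ 0 := by rintro rfl; simp at hud
        have hnorm : 0 < ‖u‖ := norm_pos_iff.2 hu0
        have hu' : ‖u‖⁻¹ • u ∈ C ∩ Metric.sphere (0 : Fin n → ℝ) 1 := by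
          refine ⟨hCsmul _ (inv_nonneg.2 hnorm.le) u huC, ?_⟩
          simp [norm_smul, abs_of_nonneg (inv_nonneg.2 hnorm.le),
            inv_mul_cancel₀ hnorm.ne']
        have h3 : d ⬝ᵥ u₀ ≤ ‖u‖⁻¹ := by
          have h4 := isMinOn_iff.1 hmin₀ _ hu'
          rw [dotProduct_smul, smul_eq_mul, hud, mul_one] at h4
          exact h4
        rw [Metric.mem_closedBall, dist_zero_right]
        exact (le_inv_comm₀ hδ hnorm).1 h3
      exact Metric.isBounded_closedBall.subset hsub
    · have hBemp : B = ∅ := by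
        rw [Set.eq_empty_iff_forall_notMem]
        rintro u ⟨huC, hud⟩
        have hu0 : u ≠ 0 := by rintro rfl; simp at hud
        have hnorm : 0 < ‖u‖ := norm_pos_iff.2 hu0
        exact hS ⟨‖u‖⁻¹ • u, hCsmul _ (inv_nonneg.2 hnorm.le) u huC, by
          simp [norm_smul, abs_of_nonneg (inv_nonneg.2 hnorm.le),
            inv_mul_cancel₀ hnorm.ne']⟩
      rw [hBemp]; exact Bornology.isBounded_empty
  have hBcompact : IsCompact B := Metric.isCompact_of_isClosed_isBounded hBclosed hBbdd
  have hBconvex : Convex ℝ B := by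
    rintro x ⟨hxC, hxd⟩ y ⟨hyC, hyd⟩ a b' ha hb hab
    constructor
    · intro i hi
      have hval : A i ⬝ᵥ (a • x + b' • y) = a * (A i ⬝ᵥ x) + b' * (A i ⬝ᵥ y) := by
        rw [dotProduct_add, dotProduct_smul, dotProduct_smul, smul_eq_mul, smul_eq_mul]
      rw [hval]
      exact add_nonneg (mul_nonneg ha (hxC i hi)) (mul_nonneg hb (hyC i hi))
    · rw [dotProduct_add, dotProduct_smul, dotProduct_smul, smul_eq_mul, smul_eq_mul,
        hxd, hyd]
      linarith
  -- extreme points of B give adjacent vertices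
  have hext : ∀ u ∈ Set.extremePoints ℝ B, 0 ≤ c ⬝ᵥ u := by
    intro u hu
    obtain ⟨huB, huext⟩ := hu
    obtain ⟨huC, hud⟩ := huB
    have hu0 : u ≠ 0 := by
      rintro rfl; simp at hud
    -- the null space of the active constraints at u is spanned by u
    have hN : ∀ y : Fin n → ℝ,
        (∀ i, A i ⬝ᵥ v = b i → A i ⬝ᵥ u = 0 → A i ⬝ᵥ y = 0) → ∃ r : ℝ, y = r • u := by
      intro y hy
      set y' : Fin n → ℝ := y - (d ⬝ᵥ y) • u with hy'def
      by_cases hy'0 : y' = 0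
      · refine ⟨d ⬝ᵥ y, ?_⟩
        have h0 : y - (d ⬝ᵥ y) • u = 0 := hy'0
        have := sub_eq_zero.1 h0
        exact this

      · exfalso
        obtain ⟨ε, hε, hεs⟩ := exists_eps
          (fun i => if A i ⬝ᵥ v = b i then A i ⬝ᵥ u else 1)
          (fun i => -|A i ⬝ᵥ y'|)
          (by
            intro i
            show (0:ℝ) ≤ if A i ⬝ᵥ v = b i then A i ⬝ᵥ u else 1
            by_cases h : A i ⬝ᵥ v = b i
            · simpa [h] using huC i h
            · simp [h])
          (by
            intro i hti
            have hti' : -|A i ⬝ᵥ y'| < 0 := hti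
            show (0:ℝ) < if A i ⬝ᵥ v = b i then A i ⬝ᵥ u else 1
            have habs : A i ⬝ᵥ y' ≠ 0 := by
              intro h; rw [h] at hti'; simp at hti'
            by_cases h : A i ⬝ᵥ v = b i
            · have hne : A i ⬝ᵥ u ≠ 0 := by
                intro h0
                apply habs
                have hyi := hy i h h0
                rw [hy'def, dotProduct_sub, dotProduct_smul, smul_eq_mul, hyi, h0]
                ring
              simp only [if_pos h]
              exact lt_of_le_of_ne (huC i h) (Ne.symm hne)
            · simp [h])
        have hy'B : ∀ (s : ℝ), |s| ≤ ε → u + s • y' ∈ B := by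
          intro s hs
          refine ⟨?_, ?_⟩
          · intro i hi
            have h1 : (0:ℝ) ≤ (if A i ⬝ᵥ v = b i then A i ⬝ᵥ u else 1)
                + ε * (-|A i ⬝ᵥ y'|) := hεs i
            rw [if_pos hi] at h1
            have h2 : ε * |A i ⬝ᵥ y'| ≤ A i ⬝ᵥ u := by linarith
            have habs : |s * (A i ⬝ᵥ y')| ≤ ε * |A i ⬝ᵥ y'| := by
              rw [abs_mul]
              exact mul_le_mul_of_nonneg_right hs (abs_nonneg _)
            have hval : A i ⬝ᵥ (u + s • y') = A i ⬝ᵥ u + s * (A i ⬝ᵥ y') := by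
              rw [dotProduct_add, dotProduct_smul, smul_eq_mul]
            rw [hval]
            have := abs_le.1 habs
            linarith
          · have hdy' : d ⬝ᵥ y' = 0 := by
              rw [hy'def, dotProduct_sub, dotProduct_smul, smul_eq_mul, hud]
              ring
            rw [dotProduct_add, dotProduct_smul, smul_eq_mul, hdy', hud]
            ring
        have h1 : u + ε • y' ∈ B := hy'B ε (by rw [abs_of_pos hε])
        have h2 : u + (-ε) • y' ∈ B := hy'B (-ε) (by rw [abs_neg, abs_of_pos hε])
        have hmid : u ∈ openSegment ℝ (u + ε • y') (u + (-ε) • y') := by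
          refine ⟨1/2, 1/2, by norm_num, by norm_num, by norm_num, ?_⟩
          module
        have h3 := huext h1 h2 hmid
        apply hy'0
        have h4 : ε • y' = 0 := by
          have := congrArg (fun z => z - u) h3
          simpa using this
        exact (smul_eq_zero.1 h4).resolve_left (ne_of_gt hε)
    -- the face cut out by the active constraints at u
    set Js : Finset (Fin m) :=
      Finset.univ.filter (fun i => A i ⬝ᵥ v = b i ∧ A i ⬝ᵥ u = 0) with hJs
    set e : Fin n → ℝ := ∑ i ∈ Js, A i with he
    set β : ℝ := ∑ i ∈ Js, b i with hβ
    have heP : ∀ x ∈ P, β ≤ e ⬝ᵥ x := by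
      intro x hx
      rw [he, sum_dot, hβ]
      exact Finset.sum_le_sum fun i _ => (hmem x).1 hx i
    set F : Set (Fin n → ℝ) := {x | x ∈ P ∧ ∀ i ∈ Js, A i ⬝ᵥ x = b i} with hF
    have hFchar : ∀ x, x ∈ F ↔ (x ∈ P ∧ ∀ y ∈ P, e ⬝ᵥ x ≤ e ⬝ᵥ y) := by
      intro x
      constructor
      · rintro ⟨hxP, hxeq⟩
        refine ⟨hxP, fun y hy => ?_⟩
        have hxe : e ⬝ᵥ x = β := by
          rw [he, sum_dot, hβ]
          exact Finset.sum_congr rfl hxeq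
        rw [hxe]
        exact heP y hy
      · rintro ⟨hxP, hxm⟩
        refine ⟨hxP, ?_⟩
        have hvJ : ∀ i ∈ Js, A i ⬝ᵥ v = b i := fun i hi => ((Finset.mem_filter.1 hi).2).1
        have hev : e ⬝ᵥ v = β := by
          rw [he, sum_dot, hβ]
          exact Finset.sum_congr rfl hvJ
        have hxe : e ⬝ᵥ x = β := le_antisymm (hev ▸ hxm v hvP) (heP x hxP)
        have h0 : ∑ i ∈ Js, (A i ⬝ᵥ x - b i) = 0 := by
          rw [Finset.sum_sub_distrib, ← sum_dot, ← he, ← hβ, hxe, sub_self]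
        intro i hi
        have h1 := (Finset.sum_eq_zero_iff_of_nonneg
          (fun j _ => sub_nonneg.2 ((hmem x).1 hxP j))).1 h0 i hi
        linarith [sub_eq_zero.1 h1]
    have hvF : v ∈ F := ⟨hvP, fun i hi => ((Finset.mem_filter.1 hi).2).1⟩
    -- F lies on the ray from v in direction u
    have hFray : ∀ x ∈ F, ∃ t : ℝ, 0 ≤ t ∧ x = v + t • u := by
      rintro x ⟨hxP, hxeq⟩
      obtain ⟨r, hr⟩ := hN (x - v) (by
        intro i hi hiu
        rw [dotProduct_sub, hi, sub_eq_zero]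
        exact hxeq i (Finset.mem_filter.2 ⟨Finset.mem_univ i, hi, hiu⟩))
      have hrval : d ⬝ᵥ (x - v) = r := by
        rw [hr, dotProduct_smul, smul_eq_mul, hud, mul_one]
      have hrpos : 0 ≤ r := by
        rw [← hrval, dotProduct_sub, sub_nonneg]
        exact hdmin x hxP
      refine ⟨r, hrpos, ?_⟩
      rw [← hr]; abel
    -- the parameter interval
    set T : Set ℝ := {t | v + t • u ∈ F} with hT
    have hT0 : (0 : ℝ) ∈ T := by
      show v + (0 : ℝ) • u ∈ F
      simpa using hvF
    obtain ⟨ε, hε, hεP⟩ := hstep u huC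
    have hTε : ε ∈ T := by
      refine ⟨hεP, fun i hi => ?_⟩
      have h1 := ((Finset.mem_filter.1 hi).2).1
      have h2 := ((Finset.mem_filter.1 hi).2).2
      rw [dotProduct_add, dotProduct_smul, smul_eq_mul, h1, h2]
      ring
    have hTnonneg : ∀ t ∈ T, 0 ≤ t := by
      intro t ht
      have h1 := hdmin _ ht.1
      rw [dotProduct_add, dotProduct_smul, smul_eq_mul, hud, mul_one] at h1
      linarith
    obtain ⟨R, hR⟩ := hc.isBounded.exists_norm_le
    have hnormu : 0 < ‖u‖ := norm_pos_iff.2 hu0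
    have hTsub : T ⊆ Set.Icc 0 ((R + ‖v‖) / ‖u‖) := by
      intro t ht
      refine ⟨hTnonneg t ht, ?_⟩
      have h1 : ‖v + t • u‖ ≤ R := hR _ ht.1
      have h2 : ‖t • u‖ ≤ R + ‖v‖ := by
        have heq : t • u = (v + t • u) - v := by abel
        rw [heq]
        calc ‖(v + t • u) - v‖ ≤ ‖v + t • u‖ + ‖v‖ := norm_sub_le _ _
        _ ≤ R + ‖v‖ := by linarith
      rw [norm_smul, Real.norm_eq_abs, abs_of_nonneg (hTnonneg t ht)] at h2
      rw [le_div_iff₀ hnormu]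
      exact h2
    have hFclosed : IsClosed F := by
      have hFeq : F = P ∩ ⋂ i ∈ Js, {x : Fin n → ℝ | A i ⬝ᵥ x = b i} := by
        ext x
        simp only [hF, Set.mem_setOf_eq, Set.mem_inter_iff, Set.mem_iInter]
      rw [hFeq]
      exact hc.isClosed.inter (isClosed_biInter fun i _ =>
        isClosed_eq (dot_cont (A i)) continuous_const)
    have hTclosed : IsClosed T := by
      have hTeq : T = (fun t : ℝ => v + t • u) ⁻¹' F := rfl
      rw [hTeq]
      exact hFclosed.preimage (continuous_const.add (continuous_id.smul continuous_const))
    have hTcompact : IsCompact T :=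
      Metric.isCompact_of_isClosed_isBounded hTclosed
        ((Metric.isBounded_Icc _ _).subset hTsub)
    have hTbdd : BddAbove T := ⟨(R + ‖v‖) / ‖u‖, fun t ht => (hTsub ht).2⟩
    set t₁ : ℝ := sSup T with ht₁def
    have ht₁T : t₁ ∈ T := hTcompact.sSup_mem ⟨0, hT0⟩
    have ht₁pos : 0 < t₁ := lt_of_lt_of_le hε (le_csSup hTbdd hTε)
    have hFconv : Convex ℝ F := by
      rintro x ⟨hxP, hxe⟩ y ⟨hyP, hye⟩ a b' ha hb hab
      refine ⟨hPconv hxP hyP ha hb hab, fun i hi => ?_⟩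
      rw [dotProduct_add, dotProduct_smul, dotProduct_smul, smul_eq_mul, smul_eq_mul,
        hxe i hi, hye i hi, ← add_mul, hab, one_mul]
    have hTconv : Convex ℝ T := by
      intro s hs t ht a b' ha hb hab
      show v + (a • s + b' • t) • u ∈ F
      have heq : a • (v + s • u) + b' • (v + t • u)
          = (a + b') • v + (a • s + b' • t) • u := by
        simp only [smul_eq_mul]
        module
      have heq2 : v + (a • s + b' • t) • u = a • (v + s • u) + b' • (v + t • u) := by
        rw [heq, hab, one_smul]
      rw [heq2]
      exact hFconv hs ht ha hb hab
    have hTIcc : T = Set.Icc 0 t₁ := by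
      apply Set.Subset.antisymm
      · exact fun t ht => ⟨hTnonneg t ht, le_csSup hTbdd ht⟩
      · exact hTconv.ordConnected.out hT0 ht₁T
    set w : Fin n → ℝ := v + t₁ • u with hw
    have hvw : v ≠ w := by
      intro h
      have h0 : t₁ • u = 0 := by
        have := congrArg (fun z => z - v) h
        simpa [hw] using this.symm
      rcases smul_eq_zero.1 h0 with h1 | h1
      · exact ne_of_gt ht₁pos h1
      · exact hu0 h1
    have hwv : w - v = t₁ • u := by rw [hw]; abel
    have hFseg : F = segment ℝ v w := by
      ext x
      constructor
      · intro hx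
        obtain ⟨t, ht0, hxeq⟩ := hFray x hx
        subst hxeq
        have htT : t ∈ T := hx
        rw [hTIcc] at htT
        rw [segment_eq_image']
        refine ⟨t / t₁, ⟨div_nonneg ht0 ht₁pos.le, (div_le_one ht₁pos).2 htT.2⟩, ?_⟩
        show v + (t / t₁) • (w - v) = v + t • u
        rw [hwv, smul_smul, div_mul_cancel₀ _ (ne_of_gt ht₁pos)]
      · intro hx
        rw [segment_eq_image'] at hx
        obtain ⟨θ, hθ, hxeq⟩ := hx
        have hxeq2 : v + θ • (w - v) = x := hxeq
        rw [hwv, smul_smul] at hxeq2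
        rw [← hxeq2]
        have hmemT : θ * t₁ ∈ T := by
          rw [hTIcc]
          refine ⟨mul_nonneg hθ.1 ht₁pos.le, ?_⟩
          nlinarith [hθ.2, hθ.1]
        exact hmemT
    have hface : IsFace P (segment ℝ v w) := by
      right
      exact ⟨e, by rw [← hFseg]; exact Set.ext hFchar⟩
    have hsegne : segment ℝ v w ≠ ∅ :=
      (Set.nonempty_of_mem (left_mem_segment ℝ v w)).ne_empty
    have hwv0 : w - v ≠ 0 := sub_ne_zero.2 (Ne.symm hvw)
    have hvspan : vectorSpan ℝ (segment ℝ v w) = Submodule.span ℝ {w - v} := by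
      apply le_antisymm
      · apply Submodule.span_le.2
        rintro z ⟨x, hx, y, hy, rfl⟩
        rw [segment_eq_image'] at hx hy
        obtain ⟨θ₁, _, rfl⟩ := hx
        obtain ⟨θ₂, _, rfl⟩ := hy
        rw [SetLike.mem_coe, Submodule.mem_span_singleton]
        refine ⟨θ₁ - θ₂, ?_⟩
        show (θ₁ - θ₂) • (w - v) = (v + θ₁ • (w - v)) -ᵥ (v + θ₂ • (w - v))
        rw [vsub_eq_sub]
        module
      · rw [Submodule.span_le, Set.singleton_subset_iff, SetLike.mem_coe]
        exact vsub_mem_vectorSpan ℝ (right_mem_segment ℝ v w) (left_mem_segment ℝ v w)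
    have hpdim : pdim (segment ℝ v w) = 1 := by
      unfold pdim
      rw [if_neg hsegne]
      have hfr : Module.finrank ℝ (vectorSpan ℝ (segment ℝ v w)) = 1 := by
        rw [hvspan]
        exact finrank_span_singleton hwv0
      rw [hfr]
      norm_num
    have hAdj : Adj P v w := ⟨hvw, hface, hpdim⟩
    have hcle := hmin w hAdj
    have hcw : c ⬝ᵥ w = c ⬝ᵥ v + t₁ * (c ⬝ᵥ u) := by
      rw [hw, dotProduct_add, dotProduct_smul, smul_eq_mul]
    nlinarith
  -- Krein–Milman: the inequality holds on all of B
  have hBnonneg : ∀ u ∈ B, 0 ≤ c ⬝ᵥ u := by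
    have hKM := closure_convexHull_extremePoints hBcompact hBconvex
    intro u hu
    have hhalf : Convex ℝ {z : Fin n → ℝ | 0 ≤ c ⬝ᵥ z} := by
      intro x hx y hy a b' ha hb hab
      have hval : c ⬝ᵥ (a • x + b' • y) = a * (c ⬝ᵥ x) + b' * (c ⬝ᵥ y) := by
        rw [dotProduct_add, dotProduct_smul, dotProduct_smul, smul_eq_mul, smul_eq_mul]
      have hx' : (0:ℝ) ≤ c ⬝ᵥ x := hx
      have hy' : (0:ℝ) ≤ c ⬝ᵥ y := hy
      show (0:ℝ) ≤ c ⬝ᵥ (a • x + b' • y)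
      rw [hval]
      exact add_nonneg (mul_nonneg ha hx') (mul_nonneg hb hy')
    have hclosed : IsClosed {z : Fin n → ℝ | 0 ≤ c ⬝ᵥ z} := by
      have heq : {z : Fin n → ℝ | 0 ≤ c ⬝ᵥ z} = (fun z => c ⬝ᵥ z) ⁻¹' (Set.Ici 0) := rfl
      rw [heq]; exact isClosed_Ici.preimage (dot_cont c)
    have hsub : B ⊆ {z | 0 ≤ c ⬝ᵥ z} := by
      rw [← hKM]
      exact closure_minimal (convexHull_min hext hhalf) hclosed
    exact hsub hu
  -- conclusion
  intro x hx
  by_cases hxv : x = v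
  · rw [hxv]
  · have hxC := hCd x hx
    have hx0 : x - v ≠ 0 := sub_ne_zero.2 hxv
    have hs : 0 < d ⬝ᵥ (x - v) := hdpos _ hxC hx0
    have hmemB : (d ⬝ᵥ (x - v))⁻¹ • (x - v) ∈ B := by
      refine ⟨hCsmul _ (inv_nonneg.2 hs.le) _ hxC, ?_⟩
      rw [dotProduct_smul, smul_eq_mul, inv_mul_cancel₀ hs.ne']
    have hB0 := hBnonneg _ hmemB
    rw [dotProduct_smul, smul_eq_mul] at hB0
    have h2 : 0 ≤ c ⬝ᵥ (x - v) := by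
      by_contra h
      push_neg at h
      nlinarith [inv_pos.2 hs]
    rw [dotProduct_sub] at h2
    linarith
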